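/- Let Y be a separable Hilbert space, G ∈ L(Y) compact selfadjoint with I+G bijective, and K ∈ L(Y) compact selfadjoint positive semidefinite with ker K = ker(K^{1/2}(I+G)K^{1/2}). Then the nonzero spectra of (I+G)K and K^{1/2}(I+G)K^{1/2} coincide: for every τ ≠ 0, τ I − (I+G)K is not injective if and only if τ I − K^{1/2}(I+G)K^{1/2} is not injective. -/

import Mathlib

open Filter Topology

lemma not_inj_iff_exists {Y : Type*} [NormedAddCommGroup Y] [InnerProductSpace ℂ Y]
    (T : Y →L[ℂ] Y) : ¬ Function.Injective ⇑T ↔ ∃ x : Y, x ≠ 0 ∧ T x = 0 := by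
  constructor
  · intro h
    replace h : LinearMap.ker (T : Y →ₗ[ℂ] Y) ≠ ⊥ := fun h2 => h (LinearMap.ker_eq_bot.mp h2)
    obtain ⟨x, hx, hx0⟩ := Submodule.exists_mem_ne_zero_of_ne_bot h
    exact ⟨x, hx0, hx⟩
  · rintro ⟨x, hx0, hx⟩ h
    exact hx0 (h (by simpa using hx))

/-- The nonzero spectra of `(I+G)K` and `K^{1/2}(I+G)K^{1/2}` coincide:
for every `τ ≠ 0`, `τ I − (I+G)K` is not injective iff `τ I − K^{1/2}(I+G)K^{1/2}` is not
injective. `R` denotes the positive square root of `K`. -/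
theorem stmt_1 {Y : Type*} [NormedAddCommGroup Y] [InnerProductSpace ℂ Y] [CompleteSpace Y]
    [TopologicalSpace.SeparableSpace Y]
    (G K R : Y →L[ℂ] Y)
    (hGc : IsCompactOperator ⇑G) (hGsa : IsSelfAdjoint G)
    (hGbij : Function.Bijective ⇑(1 + G))
    (hKc : IsCompactOperator ⇑K) (hKsa : IsSelfAdjoint K)
    (hKpos : ∀ y : Y, 0 ≤ (inner ℂ (K y) y : ℂ).re)
    (hRsa : IsSelfAdjoint R) (hRpos : ∀ y : Y, 0 ≤ (inner ℂ (R y) y : ℂ).re)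
    (hRR : R ∘L R = K)
    (hker : LinearMap.ker (K : Y →ₗ[ℂ] Y) = LinearMap.ker ((R ∘L (1 + G) ∘L R : Y →L[ℂ] Y) : Y →ₗ[ℂ] Y)) :
    ∀ τ : ℂ, τ ≠ 0 →
      (¬ Function.Injective ⇑(τ • (1 : Y →L[ℂ] Y) - (1 + G) ∘L K : Y →L[ℂ] Y) ↔
        ¬ Function.Injective ⇑(τ • (1 : Y →L[ℂ] Y) - R ∘L (1 + G) ∘L R : Y →L[ℂ] Y)) := by
  intro τ hτ
  rw [not_inj_iff_exists, not_inj_iff_exists]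
  constructor
  · rintro ⟨x, hx0, hx⟩
    -- (1+G) K x = τ x
    have hx' : (1 + G) (K x) = τ • x := by
      have := sub_eq_zero.mp (by simpa using hx)
      simpa using this.symm
    refine ⟨R x, ?_, ?_⟩
    · intro hRx
      have hKx : K x = 0 := by rw [← hRR]; simp [hRx]
      apply hx0
      have : τ • x = 0 := by rw [← hx']; simp [hKx]
      exact (smul_eq_zero.mp this).resolve_left hτ
    · have : R ((1 + G) (R (R x))) = τ • R x := by
        have : R ((1 + G) (K x)) = R (τ • x) := by rw [hx']
        simpa [← hRR, map_smul] using this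
      simp only [ContinuousLinearMap.sub_apply, ContinuousLinearMap.smul_apply,
        ContinuousLinearMap.one_apply, ContinuousLinearMap.comp_apply]
      rw [this]; abel
  · rintro ⟨y, hy0, hy⟩
    have hy' : R ((1 + G) (R y)) = τ • y := by
      have := sub_eq_zero.mp (by simpa using hy)
      simpa using this.symm
    refine ⟨(1 + G) (R y), ?_, ?_⟩
    · intro hz
      have hRy : R y = 0 := by
        have := hGbij.injective (a₁ := R y) (a₂ := 0) (by simpa using hz)
        simpa using this
      apply hy0
      have : τ • y = 0 := by rw [← hy', hRy]; simp
      exact (smul_eq_zero.mp this).resolve_left hτ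
    · have : (1 + G) (K ((1 + G) (R y))) = τ • (1 + G) (R y) := by
        have h1 : K ((1 + G) (R y)) = R (R ((1 + G) (R y))) := by rw [← hRR]; rfl
        rw [h1, hy', map_smul, map_smul]
      simp only [ContinuousLinearMap.sub_apply, ContinuousLinearMap.smul_apply,
        ContinuousLinearMap.one_apply, ContinuousLinearMap.comp_apply]
      rw [this]; abel
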